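/- Let V be a finite vertex set, let N : V → Finset V assign to each node its neighborhood, let α : V → V → ℝ be aggregation weights, let h : V → EuclideanSpace ℝ (Fin F) be the previous-layer representations, and let σ : ℝ → ℝ satisfy |σ(x) − σ(y)| ≤ |x − y| for all x, y. Define ĥᵢ = Σ_{k ∈ N(i) ∪ {i}} α i k • h k and let hᵢ′ be obtained by applying σ entrywise to ĥᵢ. Fix nodes i, j with i ∉ N(i), j ∉ N(j), i ∉ N(j), j ∉ N(i). Assume that all neighbors are common, i.e. N(i) = N(j), and that the structure weights agree on common neighbors, i.e. α i c = α j c for every c ∈ N(i). Then ‖hᵢ′ − hⱼ′‖ ≤ ‖α i i • h i − α j j • h j‖ in the Euclidean (ℓ²) norm. -/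

import Mathlib

theorem gnn_common_neighbors_feature_smoothness
    {V : Type*} [Fintype V] [DecidableEq V] {F : ℕ}
    (N : V → Finset V) (α : V → V → ℝ)
    (h : V → EuclideanSpace ℝ (Fin F))
    (σ : ℝ → ℝ) (hσ : ∀ x y : ℝ, |σ x - σ y| ≤ |x - y|)
    (hhat : V → EuclideanSpace ℝ (Fin F))
    (hdef : ∀ i, hhat i = ∑ k ∈ N i ∪ {i}, α i k • h k)
    (h' : V → EuclideanSpace ℝ (Fin F))
    (hh' : ∀ i, h' i = fun f => σ (hhat i f))
    (i j : V) (hii : i ∉ N i) (hjj : j ∉ N j) (hij : i ∉ N j) (hji : j ∉ N i)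
    (hN : N i = N j) (hα : ∀ c ∈ N i, α i c = α j c) :
    ‖h' i - h' j‖ ≤ ‖α i i • h i - α j j • h j‖ := by
  have key : hhat i - hhat j = α i i • h i - α j j • h j := by
    rw [hdef i, hdef j, ← hN]
    rw [Finset.sum_union (by simp [hii]), Finset.sum_union (by simp [hji])]
    rw [Finset.sum_congr rfl (fun c hc => by rw [hα c hc])]
    simp only [Finset.sum_singleton]
    abel
  have step : ‖h' i - h' j‖ ≤ ‖hhat i - hhat j‖ := by
    rw [EuclideanSpace.norm_eq, EuclideanSpace.norm_eq]
    apply Real.sqrt_le_sqrt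
    apply Finset.sum_le_sum
    intro f _
    have : |σ (hhat i f) - σ (hhat j f)| ≤ |hhat i f - hhat j f| := hσ _ _
    have h1 : (h' i - h' j) f
        = σ (hhat i f) - σ (hhat j f) := by rw [WithLp.ofLp_sub, Pi.sub_apply, hh' i, hh' j]
    have h2 : (hhat i - hhat j) f = hhat i f - hhat j f := rfl
    rw [h1, h2]
    exact pow_le_pow_left₀ (abs_nonneg _) this 2
  calc ‖h' i - h' j‖ ≤ ‖hhat i - hhat j‖ := step
    _ = ‖α i i • h i - α j j • h j‖ := by rw [key]
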